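/- For every function f : {-1,0,1}^n → {±1}, the Fourier influence satisfies (3/8)·I^Fourier(f) ≤ I(f) ≤ (3/4)·I^Fourier(f), where I(f) is the edge-boundary influence and I^Fourier(f) = Σ_i ⟨f, f − E_i f⟩. -/

import Mathlib

/-- The ternary hypercube `{-1,0,1}^n` as a finset of points of `ℝ^n`. -/
noncomputable def ternary (n : ℕ) : Finset (Fin n → ℝ) :=
  Fintype.piFinset fun _ => ({-1, 0, 1} : Finset ℝ)

/-- The edge-boundary influence `I(f) = 3^{−n}·#{edges (u,v) : f(u) ≠ f(v)}`, where
edges of the ternary hypercube are (unordered) pairs with `∑ i, |u i - v i| = 1`. -/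
noncomputable def edgeInfluence (n : ℕ) (f : (Fin n → ℝ) → ℝ) : ℝ :=
  (((((ternary n) ×ˢ (ternary n)).filter
      (fun p : (Fin n → ℝ) × (Fin n → ℝ) => (∑ i, |p.1 i - p.2 i|) = 1 ∧ f p.1 ≠ f p.2)).image
    (fun p => Sym2.mk p.1 p.2)).card : ℝ) / 3 ^ n

/-- The total Fourier influence `I^Fourier(f) = Σ_i ⟨f, f − E_i f⟩` with respect to the
uniform distribution on `{-1,0,1}^n`, where `E_i f(x) = E_{b∈{-1,0,1}} f(x^{i←b})`. -/
noncomputable def fourierInfluence (n : ℕ) (f : (Fin n → ℝ) → ℝ) : ℝ :=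
  ∑ i : Fin n,
    (∑ x ∈ ternary n, f x * (f x -
      (f (Function.update x i (-1)) + f (Function.update x i 0) +
        f (Function.update x i 1)) / 3)) / 3 ^ n

open Finset Function in
private lemma mem_ternary {n : ℕ} {x : Fin n → ℝ} :
    x ∈ ternary n ↔ ∀ i, x i ∈ ({-1, 0, 1} : Finset ℝ) :=
  Fintype.mem_piFinset

private lemma update_mem_ternary {n : ℕ} {x : Fin n → ℝ} (hx : x ∈ ternary n)
    (i : Fin n) {b : ℝ} (hb : b ∈ ({-1, 0, 1} : Finset ℝ)) :
    Function.update x i b ∈ ternary n := by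
  rw [mem_ternary] at hx ⊢
  intro j
  rcases eq_or_ne j i with h | h
  · subst h; simpa using hb
  · simpa [Function.update_of_ne h] using hx j

private lemma abs_one_of_ne {s t : ℝ} (hs : s ∈ ({-1, 0, 1} : Finset ℝ))
    (ht : t ∈ ({-1, 0, 1} : Finset ℝ)) (h : s ≠ t) : 1 ≤ |s - t| := by
  simp only [Finset.mem_insert, Finset.mem_singleton] at hs ht
  rcases hs with rfl | rfl | rfl <;> rcases ht with rfl | rfl | rfl <;> revert h <;> norm_num

private lemma pair_char {n : ℕ} {u v : Fin n → ℝ} (hu : u ∈ ternary n) (hv : v ∈ ternary n)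
    (h : ∑ i, |u i - v i| = 1) :
    ∃ i : Fin n, |u i - v i| = 1 ∧ v = Function.update u i (v i) := by
  have hne : ∃ i, u i ≠ v i := by
    by_contra hc
    push_neg at hc
    simp [hc] at h
  obtain ⟨i, hi⟩ := hne
  have h1 : 1 ≤ |u i - v i| := abs_one_of_ne (mem_ternary.mp hu i) (mem_ternary.mp hv i) hi
  have hle : |u i - v i| ≤ ∑ j, |u j - v j| :=
    Finset.single_le_sum (f := fun j => |u j - v j|) (fun j _ => abs_nonneg _)
      (Finset.mem_univ i)
  have heq : |u i - v i| = 1 := le_antisymm (h ▸ hle) h1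
  have hsplit := Finset.add_sum_erase Finset.univ (fun j => |u j - v j|) (Finset.mem_univ i)
  have hrest0 : ∑ j ∈ Finset.univ.erase i, |u j - v j| = 0 := by
    have hnn : (0:ℝ) ≤ ∑ j ∈ Finset.univ.erase i, |u j - v j| :=
      Finset.sum_nonneg fun j _ => abs_nonneg _
    nlinarith [hsplit, h, heq]
  have hrest : ∀ j, j ≠ i → u j = v j := by
    intro j hj
    have := (Finset.sum_eq_zero_iff_of_nonneg (fun k _ => abs_nonneg _)).mp hrest0 j
      (Finset.mem_erase.mpr ⟨hj, Finset.mem_univ j⟩)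
    have := abs_eq_zero.mp this
    linarith [sub_eq_zero.mp this]
  refine ⟨i, heq, ?_⟩
  funext j
  rcases eq_or_ne j i with rfl | hj
  · simp
  · simp [Function.update_of_ne hj, hrest j hj]

private lemma cardP (n : ℕ) (f : (Fin n → ℝ) → ℝ) :
    (((ternary n) ×ˢ ((Finset.univ : Finset (Fin n)) ×ˢ ({-1, 0, 1} : Finset ℝ))).filter
        (fun q => |q.1 q.2.1 - q.2.2| = 1 ∧ f q.1 ≠ f (Function.update q.1 q.2.1 q.2.2))).card
      = (((ternary n) ×ˢ (ternary n)).filter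
        (fun p => (∑ i, |p.1 i - p.2 i|) = 1 ∧ f p.1 ≠ f p.2)).card := by
  classical
  apply Finset.card_bij (fun q _ => (q.1, Function.update q.1 q.2.1 q.2.2))
  · rintro ⟨x, i, b⟩ hq
    simp only [Finset.mem_filter, Finset.mem_product, Finset.mem_univ, true_and] at hq ⊢
    obtain ⟨⟨hx, hb⟩, habs, hne⟩ := hq
    refine ⟨⟨hx, update_mem_ternary hx i hb⟩, ?_, hne⟩
    rw [Finset.sum_eq_single i]
    · simpa using habs
    · intro j _ hj
      simp [Function.update_of_ne hj]
    · simp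
  · rintro ⟨x, i, b⟩ hq ⟨x', i', b'⟩ hq' heq
    simp only [Finset.mem_filter, Finset.mem_product, Finset.mem_univ, true_and] at hq hq'
    obtain ⟨-, habs, -⟩ := hq
    obtain ⟨-, habs', -⟩ := hq'
    simp only [Prod.mk.injEq] at heq
    obtain ⟨rfl, hupd⟩ := heq
    have hbne : b ≠ x i := by
      intro hh; rw [hh] at habs; simp at habs
    have hii : i = i' := by
      by_contra hii
      have : Function.update x i b i = Function.update x i' b' i := by rw [hupd]
      rw [Function.update_self, Function.update_of_ne hii] at this
      exact hbne this
    subst hii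
    have : Function.update x i b i = Function.update x i b' i := by rw [hupd]
    simp at this
    simp [this]
  · rintro ⟨u, v⟩ hp
    simp only [Finset.mem_filter, Finset.mem_product] at hp
    obtain ⟨⟨hu, hv⟩, hsum, hne⟩ := hp
    obtain ⟨i, habs, hvu⟩ := pair_char hu hv hsum
    refine ⟨(u, i, v i), ?_, ?_⟩
    · simp only [Finset.mem_filter, Finset.mem_product, Finset.mem_univ, true_and]
      exact ⟨⟨hu, mem_ternary.mp hv i⟩, habs, by rw [← hvu]; exact hne⟩
    · simp [← hvu]

private lemma two_mul_image (n : ℕ) (f : (Fin n → ℝ) → ℝ) :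
    ((((ternary n) ×ˢ (ternary n)).filter
        (fun p => (∑ i, |p.1 i - p.2 i|) = 1 ∧ f p.1 ≠ f p.2)).card)
      = 2 * (((((ternary n) ×ˢ (ternary n)).filter
        (fun p : (Fin n → ℝ) × (Fin n → ℝ) => (∑ i, |p.1 i - p.2 i|) = 1 ∧ f p.1 ≠ f p.2)).image
          (fun p => Sym2.mk p.1 p.2)).card) := by
  classical
  set P := (((ternary n) ×ˢ (ternary n)).filter
      (fun p => (∑ i, |p.1 i - p.2 i|) = 1 ∧ f p.1 ≠ f p.2)) with hP
  rw [Finset.card_eq_sum_card_image (fun p => Sym2.mk p.1 p.2) P]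
  rw [Finset.sum_congr rfl (g := fun _ => 2) ?_, Finset.sum_const, smul_eq_mul, mul_comm]
  intro s hs
  obtain ⟨p, hp, rfl⟩ := Finset.mem_image.mp hs
  obtain ⟨u, v⟩ := p
  have hp' := hp
  rw [hP, Finset.mem_filter, Finset.mem_product] at hp'
  obtain ⟨⟨hu, hv⟩, hsum, hne⟩ := hp'
  have huv : u ≠ v := fun h => hne (by rw [h])
  have hvuP : (v, u) ∈ P := by
    rw [hP, Finset.mem_filter, Finset.mem_product]
    refine ⟨⟨hv, hu⟩, ?_, Ne.symm hne⟩
    simpa [abs_sub_comm] using hsum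
  have hfib : P.filter (fun q => Sym2.mk q.1 q.2 = Sym2.mk u v) = {(u, v), (v, u)} := by
    ext ⟨a, b⟩
    simp only [Finset.mem_filter, Finset.mem_insert, Finset.mem_singleton, Prod.mk.injEq,
      Sym2.eq_iff]
    constructor
    · rintro ⟨-, (⟨rfl, rfl⟩ | ⟨rfl, rfl⟩)⟩
      · left; exact ⟨rfl, rfl⟩
      · right; exact ⟨rfl, rfl⟩
    · rintro (⟨rfl, rfl⟩ | ⟨rfl, rfl⟩)
      · exact ⟨hp, Or.inl ⟨rfl, rfl⟩⟩
      · exact ⟨hvuP, Or.inr ⟨rfl, rfl⟩⟩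
  rw [hfib]
  rw [Finset.card_insert_of_notMem (by simp [Prod.ext_iff, huv]), Finset.card_singleton]

private lemma sum_lines (n : ℕ) (i : Fin n) (g : (Fin n → ℝ) → ℝ) :
    ∑ x ∈ ternary n, g x
      = ∑ r ∈ (ternary n).filter (fun x => x i = 0), ∑ b ∈ ({-1, 0, 1} : Finset ℝ),
          g (Function.update r i b) := by
  classical
  rw [← Finset.sum_product']
  apply Finset.sum_nbij' (i := fun x => (Function.update x i 0, x i))
    (j := fun q => Function.update q.1 i q.2)
  · intro x hx
    simp only [Finset.mem_product, Finset.mem_filter]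
    refine ⟨⟨update_mem_ternary hx i (by norm_num), by simp⟩, mem_ternary.mp hx i⟩
  · intro q hq
    simp only [Finset.mem_product, Finset.mem_filter] at hq
    exact update_mem_ternary hq.1.1 i hq.2
  · intro x hx
    simp [Function.update_idem]
  · rintro ⟨r, b⟩ hq
    simp only [Finset.mem_product, Finset.mem_filter] at hq
    simp only [Function.update_idem, Function.update_self, Prod.mk.injEq]
    constructor
    · rw [← hq.1.2]; exact Function.update_eq_self i r
    · trivial
  · intro x hx
    simp [Function.update_idem]

private lemma sum_tset (g : ℝ → ℝ) :
    ∑ b ∈ ({-1, 0, 1} : Finset ℝ), g b = g (-1) + g 0 + g 1 := by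
  rw [show ({-1, 0, 1} : Finset ℝ) = insert (-1 : ℝ) (insert 0 {1}) from rfl]
  rw [Finset.sum_insert (by norm_num), Finset.sum_insert (by norm_num), Finset.sum_singleton]
  ring

private lemma line_key (a b c : ℝ) (ha : a = 1 ∨ a = -1) (hb : b = 1 ∨ b = -1)
    (hc : c = 1 ∨ c = -1) :
    3 / 4 * (a * (a - (a + b + c) / 3) + b * (b - (a + b + c) / 3) + c * (c - (a + b + c) / 3))
        ≤ ((if a ≠ b then (1:ℝ) else 0) + (if b ≠ a then (1:ℝ) else 0)
            + (if b ≠ c then (1:ℝ) else 0) + (if c ≠ b then (1:ℝ) else 0))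
      ∧ ((if a ≠ b then (1:ℝ) else 0) + (if b ≠ a then (1:ℝ) else 0)
            + (if b ≠ c then (1:ℝ) else 0) + (if c ≠ b then (1:ℝ) else 0))
        ≤ 3 / 2 * (a * (a - (a + b + c) / 3) + b * (b - (a + b + c) / 3)
            + c * (c - (a + b + c) / 3)) := by
  rcases ha with rfl | rfl <;> rcases hb with rfl | rfl <;> rcases hc with rfl | rfl <;>
    norm_num

private lemma key (n : ℕ) (f : (Fin n → ℝ) → ℝ)
    (hf : ∀ x ∈ ternary n, f x = 1 ∨ f x = -1) (i : Fin n) :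
    3 / 4 * (∑ x ∈ ternary n, f x * (f x -
        (f (Function.update x i (-1)) + f (Function.update x i 0) +
          f (Function.update x i 1)) / 3))
      ≤ (∑ x ∈ ternary n, ∑ b ∈ ({-1, 0, 1} : Finset ℝ),
          if |x i - b| = 1 ∧ f x ≠ f (Function.update x i b) then (1:ℝ) else 0)
    ∧ (∑ x ∈ ternary n, ∑ b ∈ ({-1, 0, 1} : Finset ℝ),
          if |x i - b| = 1 ∧ f x ≠ f (Function.update x i b) then (1:ℝ) else 0)
      ≤ 3 / 2 * (∑ x ∈ ternary n, f x * (f x -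
        (f (Function.update x i (-1)) + f (Function.update x i 0) +
          f (Function.update x i 1)) / 3)) := by
  classical
  rw [sum_lines n i, sum_lines n i, Finset.mul_sum, Finset.mul_sum]
  have main : ∀ r ∈ (ternary n).filter (fun x => x i = 0),
      (3 / 4 * (∑ b ∈ ({-1, 0, 1} : Finset ℝ),
          f (Function.update r i b) * (f (Function.update r i b) -
            (f (Function.update (Function.update r i b) i (-1)) +
              f (Function.update (Function.update r i b) i 0) +
              f (Function.update (Function.update r i b) i 1)) / 3))
        ≤ ∑ b' ∈ ({-1, 0, 1} : Finset ℝ), ∑ b ∈ ({-1, 0, 1} : Finset ℝ),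
            if |Function.update r i b' i - b| = 1 ∧
                f (Function.update r i b') ≠ f (Function.update (Function.update r i b') i b)
              then (1:ℝ) else 0)
      ∧ ((∑ b' ∈ ({-1, 0, 1} : Finset ℝ), ∑ b ∈ ({-1, 0, 1} : Finset ℝ),
            if |Function.update r i b' i - b| = 1 ∧
                f (Function.update r i b') ≠ f (Function.update (Function.update r i b') i b)
              then (1:ℝ) else 0)
        ≤ 3 / 2 * (∑ b ∈ ({-1, 0, 1} : Finset ℝ),
          f (Function.update r i b) * (f (Function.update r i b) -
            (f (Function.update (Function.update r i b) i (-1)) +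
              f (Function.update (Function.update r i b) i 0) +
              f (Function.update (Function.update r i b) i 1)) / 3))) := by
    intro r hr
    have hrt : r ∈ ternary n := (Finset.mem_filter.mp hr).1
    have ha := hf _ (update_mem_ternary hrt i (show (-1:ℝ) ∈ ({-1,0,1}:Finset ℝ) by norm_num))
    have hb := hf _ (update_mem_ternary hrt i (show (0:ℝ) ∈ ({-1,0,1}:Finset ℝ) by norm_num))
    have hc := hf _ (update_mem_ternary hrt i (show (1:ℝ) ∈ ({-1,0,1}:Finset ℝ) by norm_num))
    simp only [Function.update_idem, Function.update_self]
    rw [sum_tset, sum_tset, sum_tset, sum_tset, sum_tset]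
    rcases ha with h1 | h1 <;> rcases hb with h2 | h2 <;> rcases hc with h3 | h3 <;>
      rw [h1, h2, h3] <;> norm_num
  exact ⟨Finset.sum_le_sum fun r hr => (main r hr).1,
    Finset.sum_le_sum fun r hr => (main r hr).2⟩

/-- For every `f : {-1,0,1}^n → {±1}`,
`(3/8)·I^Fourier(f) ≤ I(f) ≤ (3/4)·I^Fourier(f)`. -/
theorem stmt_17 (n : ℕ) (f : (Fin n → ℝ) → ℝ)
    (hf : ∀ x ∈ ternary n, f x = 1 ∨ f x = -1) :
    3 / 8 * fourierInfluence n f ≤ edgeInfluence n f ∧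
      edgeInfluence n f ≤ 3 / 4 * fourierInfluence n f := by
  classical
  have hpow : (0:ℝ) < 3 ^ n := by positivity
  set S : Fin n → ℝ := fun i => ∑ x ∈ ternary n, ∑ b ∈ ({-1, 0, 1} : Finset ℝ),
      if |x i - b| = 1 ∧ f x ≠ f (Function.update x i b) then (1:ℝ) else 0 with hS
  set Φ : Fin n → ℝ := fun i => ∑ x ∈ ternary n, f x * (f x -
      (f (Function.update x i (-1)) + f (Function.update x i 0) +
        f (Function.update x i 1)) / 3) with hΦ
  have hTcard : ((((ternary n) ×ˢ ((Finset.univ : Finset (Fin n)) ×ˢ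
        ({-1, 0, 1} : Finset ℝ))).filter
        (fun q => |q.1 q.2.1 - q.2.2| = 1 ∧
          f q.1 ≠ f (Function.update q.1 q.2.1 q.2.2))).card : ℝ) = ∑ i : Fin n, S i := by
    rw [Finset.card_filter]
    push_cast
    rw [Finset.sum_product]
    simp_rw [Finset.sum_product]
    rw [Finset.sum_comm]
  have hedge : edgeInfluence n f = (∑ i : Fin n, S i) / (2 * 3 ^ n) := by
    have h3 : (((ternary n) ×ˢ ((Finset.univ : Finset (Fin n)) ×ˢ
          ({-1, 0, 1} : Finset ℝ))).filter
          (fun q => |q.1 q.2.1 - q.2.2| = 1 ∧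
            f q.1 ≠ f (Function.update q.1 q.2.1 q.2.2))).card
        = 2 * (((((ternary n) ×ˢ (ternary n)).filter
          (fun p : (Fin n → ℝ) × (Fin n → ℝ) => (∑ i, |p.1 i - p.2 i|) = 1 ∧ f p.1 ≠ f p.2)).image
            (fun p => Sym2.mk p.1 p.2)).card) := (cardP n f).trans (two_mul_image n f)
    rw [edgeInfluence, ← hTcard, h3]
    push_cast
    field_simp
  have hfour : fourierInfluence n f = (∑ i : Fin n, Φ i) / 3 ^ n := by
    rw [fourierInfluence, ← Finset.sum_div]
  have hkey1 : ∑ i : Fin n, (3 / 4 * Φ i) ≤ ∑ i : Fin n, S i :=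
    Finset.sum_le_sum fun i _ => (key n f hf i).1
  have hkey2 : ∑ i : Fin n, S i ≤ ∑ i : Fin n, (3 / 2 * Φ i) :=
    Finset.sum_le_sum fun i _ => (key n f hf i).2
  rw [← Finset.mul_sum] at hkey1 hkey2
  rw [hedge, hfour]
  constructor
  · calc 3 / 8 * ((∑ i : Fin n, Φ i) / 3 ^ n)
        = (3 / 4 * ∑ i : Fin n, Φ i) / (2 * 3 ^ n) := by
          rw [mul_div_assoc', div_eq_div_iff (by positivity) (by positivity)]; ring
      _ ≤ (∑ i : Fin n, S i) / (2 * 3 ^ n) :=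
        (div_le_div_iff_of_pos_right (by positivity)).mpr hkey1
  · calc (∑ i : Fin n, S i) / (2 * 3 ^ n)
        ≤ (3 / 2 * ∑ i : Fin n, Φ i) / (2 * 3 ^ n) :=
          (div_le_div_iff_of_pos_right (by positivity)).mpr hkey2
      _ = 3 / 4 * ((∑ i : Fin n, Φ i) / 3 ^ n) := by
          rw [mul_div_assoc', div_eq_div_iff (by positivity) (by positivity)]; ring
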